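/- Let p > 3 be a prime and let A be an 𝔽_p-brace of cardinality p^4 whose multiplicative group (A,∘) is the group XV, with generators P, Q, R, S ∈ A satisfying the XV relations. Then P ∈ A^3, P*A^i ⊆ A^{i+3} for all i ≥ 1, and consequently P*P = 0, Q*P = 0, P*Q = 0, a*P = P*a ∈ A^4 for all a ∈ A, and P*A^2 = A^2*P = 0. -/

import Mathlib

/-- A left brace: `(A, +)` an abelian group, `(A, *)` a group (we write the brace
multiplication `∘` as `*`), with `a * (b + c) + a = a * b + a * c`. -/
class LeftBrace (A : Type*) extends Group A, AddCommGroup A where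
  mul_add_eq : ∀ a b c : A, a * (b + c) + a = a * b + a * c

namespace LeftBrace

/-- The star operation `a * b = a∘b - a - b` of a left brace. -/
def star {A : Type*} [LeftBrace A] (a b : A) : A := a * b - a - b

end LeftBrace

/-- An `𝔽ₚ`-brace: a left brace whose additive group is a `ZMod p`-vector space
with `a * (α • b) = α • (a * b)`. -/
class FpBrace (p : ℕ) (A : Type*) extends LeftBrace A, Module (ZMod p) A where
  star_smul' : ∀ (α : ZMod p) (a b : A),
    LeftBrace.star a (α • b) = α • LeftBrace.star a b

/-- The left chain `A^1 = A`, `A^{i+1} = A * A^i` (additive subgroup generated by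
`a * b`, `a ∈ A`, `b ∈ A^i`). -/
def lpow (A : Type*) [LeftBrace A] : ℕ → AddSubgroup A
  | 0 => ⊤
  | 1 => ⊤
  | (n+2) => AddSubgroup.closure
      {x : A | ∃ a : A, ∃ b ∈ lpow A (n+1), x = LeftBrace.star a b}

/-- The right chain `A^{(1)} = A`, `A^{(i+1)} = A^{(i)} * A`. -/
def rpow (A : Type*) [LeftBrace A] : ℕ → AddSubgroup A
  | 0 => ⊤
  | 1 => ⊤
  | (n+2) => AddSubgroup.closure
      {x : A | ∃ a ∈ rpow A (n+1), ∃ b : A, x = LeftBrace.star a b}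

/-- A left brace is right nilpotent if `A^{(n)} = 0` for some `n`. -/
def IsRightNilpotent (A : Type*) [LeftBrace A] : Prop := ∃ n, rpow A n = ⊥

/-- The defining relations of the group XV on generators `P, Q, R, S`. -/
def XVRelations {A : Type*} [LeftBrace A] (p : ℕ) (P Q R S : A) : Prop :=
  Q * S = S * Q * P ∧ Q * R = R * Q ∧ P * S = S * P ∧ P * Q = Q * P ∧
  P * R = R * P ∧ R * S = S * R * Q ∧
  P ^ p = 1 ∧ Q ^ p = 1 ∧ R ^ p = 1 ∧ S ^ p = 1

/-- The multiplicative group of the brace `A` is the group XV, with generators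
`P, Q, R, S` satisfying the XV relations. -/
def IsXVBrace (p : ℕ) (A : Type*) [LeftBrace A] (P Q R S : A) : Prop :=
  Nat.card A = p ^ 4 ∧ Subgroup.closure {P, Q, R, S} = ⊤ ∧ XVRelations p P Q R S


/-- The Multiplicative Table with parameters `y, i, k`. -/
def MultTable {p : ℕ} {A : Type*} [LeftBrace A] [Module (ZMod p) A]
    (P Q R S : A) (y i k : ZMod p) : Prop :=
  LeftBrace.star P P = 0 ∧ LeftBrace.star P Q = 0 ∧
  LeftBrace.star P R = y • S ∧ LeftBrace.star P S = 0 ∧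
  LeftBrace.star Q P = 0 ∧ LeftBrace.star Q Q = -(y • S) ∧
  LeftBrace.star Q R = ((2 : ZMod p)⁻¹ * y) • S ∧ LeftBrace.star Q S = 0 ∧
  LeftBrace.star R P = y • S ∧ LeftBrace.star R Q = ((2 : ZMod p)⁻¹ * y) • S ∧
  LeftBrace.star R R = i • P + k • S ∧ LeftBrace.star R S = 0 ∧
  LeftBrace.star S P = 0 ∧ LeftBrace.star S Q = -P ∧
  LeftBrace.star S R = -Q + P - ((2 : ZMod p)⁻¹ * y) • S ∧ LeftBrace.star S S = 0

/-- Additive subgroup generated by all `x * y`, `x ∈ X`, `y ∈ Y`. -/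
def starSpan {A : Type*} [LeftBrace A] (X Y : AddSubgroup A) : AddSubgroup A :=
  AddSubgroup.closure {z : A | ∃ x ∈ X, ∃ y ∈ Y, z = LeftBrace.star x y}

/-- An ideal of a left brace: an additive subgroup closed under all `λ_a` and
normal in `(A, ∘)`. -/
def IsBraceIdeal {A : Type*} [LeftBrace A] (I : AddSubgroup A) : Prop :=
  (∀ a : A, ∀ b ∈ I, a * b - a ∈ I) ∧ (∀ a : A, ∀ b ∈ I, a * b * a⁻¹ ∈ I)

/-- A brace is prime if the product of any two nonzero ideals is nonzero. -/
def IsPrimeBrace (A : Type*) [LeftBrace A] : Prop :=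
  ∀ I J : AddSubgroup A, IsBraceIdeal I → IsBraceIdeal J → I ≠ ⊥ → J ≠ ⊥ →
    starSpan I J ≠ ⊥

/-- Left chain of a nonassociative algebra given by a bilinear map. -/
def preLieL (R : Type*) [CommRing R] (V : Type*) [AddCommGroup V] [Module R V]
    (mul : V →ₗ[R] V →ₗ[R] V) : ℕ → Submodule R V
  | 0 => ⊤
  | 1 => ⊤
  | (n+2) => Submodule.span R
      {x : V | ∃ a : V, ∃ b ∈ preLieL R V mul (n+1), x = mul a b}

/-- Right chain of a nonassociative algebra given by a bilinear map. -/
def preLieR (R : Type*) [CommRing R] (V : Type*) [AddCommGroup V] [Module R V]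
    (mul : V →ₗ[R] V →ₗ[R] V) : ℕ → Submodule R V
  | 0 => ⊤
  | 1 => ⊤
  | (n+2) => Submodule.span R
      {x : V | ∃ a ∈ preLieR R V mul (n+1), ∃ b : V, x = mul a b}

/-- The defining relations of the group XIV on generators `P, Q, R, S`. -/
def XIVRelations {A : Type*} [LeftBrace A] (p : ℕ) (P Q R S : A) : Prop :=
  Q * P = P * Q ∧ Q * R = R * Q ∧ Q * S = S * Q ∧
  P * R = R * P ∧ P * S = S * P ∧ R * S = S * R * P ∧
  P ^ p = 1 ∧ Q ^ p = 1 ∧ R ^ p = 1 ∧ S ^ p = 1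


/-! ### Auxiliary development for Statement 3 -/

namespace Brace3Aux

variable {A : Type*} [LeftBrace A]

local notation "st" => LeftBrace.star

lemma st_def (a b : A) : st a b = a * b - a - b := rfl

lemma mul_add_eq' (a b c : A) : a * (b + c) = a * b + a * c - a := by
  have h := LeftBrace.mul_add_eq a b c
  rw [← h]; abel

lemma mul_zero_eq (a : A) : a * (0 : A) = a := by
  have h := LeftBrace.mul_add_eq a 0 0
  rw [add_zero] at h
  exact (add_left_cancel h).symm

lemma one_eq_zero : (1 : A) = 0 := by
  have h := mul_zero_eq (1 : A)
  rw [one_mul] at h; exact h.symm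

/-- The lambda map `λ_a(x) = a∘x - a` as an additive hom. -/
def lam (a : A) : A →+ A where
  toFun x := a * x - a
  map_zero' := by show a * 0 - a = 0; rw [mul_zero_eq]; abel
  map_add' x y := by
    show a * (x + y) - a = (a * x - a) + (a * y - a)
    rw [mul_add_eq' a x y]; abel

lemma lam_apply (a x : A) : lam a x = a * x - a := rfl

lemma lam_mul (a b x : A) : lam (a * b) x = lam a (lam b x) := by
  have h := (lam a).map_sub (b * x) b
  rw [lam_apply, lam_apply, lam_apply] at h
  rw [lam_apply, lam_apply, lam_apply, h, mul_assoc]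
  abel

lemma lam_one (x : A) : lam (1 : A) x = x := by
  rw [lam_apply, one_mul, one_eq_zero]; abel

lemma lam_inv_cancel (a x : A) : lam a⁻¹ (lam a x) = x := by
  rw [← lam_mul, inv_mul_cancel, lam_one]

lemma star_eq (a x : A) : st a x = lam a x - x := by
  rw [st_def, lam_apply]

lemma lam_eq (a x : A) : lam a x = st a x + x := by
  rw [star_eq]; abel

lemma star_add (a x y : A) : st a (x + y) = st a x + st a y := by
  rw [star_eq, star_eq, star_eq, (lam a).map_add]; abel

lemma star_zero (a : A) : st a (0:A) = 0 := by
  rw [star_eq, (lam a).map_zero]; abel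

lemma star_neg (a x : A) : st a (-x) = - st a x := by
  rw [star_eq, star_eq, (lam a).map_neg]; abel

lemma mul_eq_add (a b : A) : a * b = a + b + st a b := by
  rw [st_def]; abel

/-- For a commutation relation `a∘b = b∘a∘c`, express `c` via stars. -/
lemma conj_elt {a b c : A} (h : a * b = b * a * c) :
    c = lam (b*a)⁻¹ (st a b - st b a) := by
  have h1 : lam (b*a) c = st a b - st b a := by
    rw [lam_apply, ← h, mul_eq_add a b, mul_eq_add b a]; abel
  rw [← h1, lam_inv_cancel]

/-- For a commutation relation `a∘b = b∘a∘c`, express `star c x` via stars. -/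
lemma conj_star {a b c : A} (h : a * b = b * a * c) (x : A) :
    st c x = lam (b*a)⁻¹ (st a (st b x) - st b (st a x)) := by
  have hc : c = (b*a)⁻¹ * (a*b) := by rw [h]; group
  have h2 : lam c x = lam (b*a)⁻¹ (lam a (lam b x)) := by
    rw [hc, lam_mul, lam_mul]
  have h3 : lam (b*a)⁻¹ (lam b (lam a x)) = x := by
    rw [← lam_mul, ← lam_mul, mul_assoc, inv_mul_cancel, lam_one]
  have h4 : lam a (lam b x) - lam b (lam a x)
      = st a (st b x) - st b (st a x) := by
    rw [lam_eq b x, lam_eq a x, lam_eq a (st b x + x), lam_eq b (st a x + x),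
      star_add, star_add]
    abel
  rw [star_eq, h2, ← h4, (lam (b*a)⁻¹).map_sub, h3]

/-! ### The left chain -/

lemma lpow_one' : lpow A 1 = ⊤ := rfl
lemma lpow_two_add (n : ℕ) : lpow A (n+2) = AddSubgroup.closure
    {x : A | ∃ a : A, ∃ b ∈ lpow A (n+1), x = LeftBrace.star a b} := rfl

lemma lpow_succ_le : ∀ n : ℕ, lpow A (n+1) ≤ lpow A n
  | 0 => le_top
  | 1 => le_top
  | (n+2) => by
    rw [lpow_two_add, lpow_two_add]
    apply AddSubgroup.closure_mono
    rintro x ⟨a, b, hb, rfl⟩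
    exact ⟨a, b, lpow_succ_le (n+1) hb, rfl⟩

lemma lpow_le_lpow {m n : ℕ} (h : m ≤ n) : lpow A n ≤ lpow A m := by
  induction h with
  | refl => exact le_rfl
  | step _ ih => exact le_trans (lpow_succ_le _) ih

lemma star_mem_lpow {n : ℕ} (hn : 1 ≤ n) (a : A) {x : A} (hx : x ∈ lpow A n) :
    st a x ∈ lpow A (n+1) := by
  obtain ⟨m, rfl⟩ : ∃ m, n = m + 1 := ⟨n - 1, (Nat.succ_pred_eq_of_pos hn).symm⟩
  rw [lpow_two_add]
  exact AddSubgroup.subset_closure ⟨a, x, hx, rfl⟩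

lemma lam_mem_lpow (a : A) {n : ℕ} {x : A} (hx : x ∈ lpow A n) :
    lam a x ∈ lpow A n := by
  rcases n with - | m
  · exact AddSubgroup.mem_top _
  · rw [lam_eq]
    exact AddSubgroup.add_mem _
      (lpow_succ_le (m+1) (star_mem_lpow (Nat.succ_le_succ (Nat.zero_le m)) a hx)) hx

/-! ### Left nilpotency: `lpow A 5 = ⊥` -/

section B

variable {p : ℕ}

/-- If `J < I` are `λ`-invariant additive subgroups of a brace of order `p ^ 4`,
there is `x ∈ I \ J` with `st a x ∈ J` for all `a`. -/
lemma exists_semifixed (hp : p.Prime) (hcard : Nat.card A = p ^ 4)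
    {I J : AddSubgroup A} (hJI : J < I)
    (hI : ∀ a : A, ∀ x ∈ I, lam a x ∈ I) (hJ : ∀ a : A, ∀ x ∈ J, lam a x ∈ J) :
    ∃ x ∈ I, x ∉ J ∧ ∀ a : A, st a x ∈ J := by
  haveI : Fact p.Prime := ⟨hp⟩
  haveI : Finite A := Nat.finite_of_card_ne_zero (by
    rw [hcard]; exact pow_ne_zero _ hp.pos.ne')
  set JI : AddSubgroup I := J.addSubgroupOf I with hJIdef
  let f : A → (↥I →+ ↥I) := fun a =>
    { toFun := fun x => ⟨lam a x.1, hI a x.1 x.2⟩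
      map_zero' := Subtype.ext ((lam a).map_zero)
      map_add' := fun x y => Subtype.ext ((lam a).map_add x.1 y.1) }
  have hf : ∀ a : A, JI ≤ JI.comap (f a) := by
    intro a x hx
    have : (x : A) ∈ J := hx
    exact (hJ a x.1 this : lam a x.1 ∈ J)
  letI : MulAction A (↥I ⧸ JI) :=
    { smul := fun a q => QuotientAddGroup.map JI JI (f a) (hf a) q
      one_smul := fun q => by
        refine QuotientAddGroup.induction_on q (fun x => ?_)
        show QuotientAddGroup.map JI JI (f 1) (hf 1) _ = _
        rw [QuotientAddGroup.map_mk]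
        exact congrArg _ (Subtype.ext (lam_one x.1))
      mul_smul := fun a b q => by
        refine QuotientAddGroup.induction_on q (fun x => ?_)
        show QuotientAddGroup.map JI JI (f (a*b)) (hf (a*b)) _
          = QuotientAddGroup.map JI JI (f a) (hf a)
            (QuotientAddGroup.map JI JI (f b) (hf b) _)
        rw [QuotientAddGroup.map_mk, QuotientAddGroup.map_mk, QuotientAddGroup.map_mk]
        exact congrArg _ (Subtype.ext (lam_mul a b x.1)) }
  have hsmul : ∀ (a : A) (x : ↥I), a • (QuotientAddGroup.mk x : ↥I ⧸ JI)
      = QuotientAddGroup.mk (f a x) := fun a x => QuotientAddGroup.map_mk _ _ _ _ _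
  have hpg : IsPGroup p A := IsPGroup.of_card hcard
  have h0fix : (0 : ↥I ⧸ JI) ∈ MulAction.fixedPoints A (↥I ⧸ JI) := by
    intro a
    show QuotientAddGroup.map JI JI (f a) (hf a) 0 = 0
    exact map_zero _
  have hIdvd : Nat.card ↥I ∣ p ^ 4 := hcard ▸ I.card_addSubgroup_dvd_card
  have hQdvd : Nat.card (↥I ⧸ JI) ∣ p ^ 4 := by
    refine dvd_trans ?_ hIdvd
    rw [AddSubgroup.card_eq_card_quotient_mul_card_addSubgroup JI]
    exact dvd_mul_right _ _
  obtain ⟨hle, x0, hx0I, hx0J⟩ := SetLike.lt_iff_le_and_exists.mp hJI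
  have hne : (QuotientAddGroup.mk (⟨x0, hx0I⟩ : ↥I) : ↥I ⧸ JI) ≠ 0 := by
    intro h
    exact hx0J (AddSubgroup.mem_addSubgroupOf.mp
      ((QuotientAddGroup.eq_zero_iff (⟨x0, hx0I⟩ : ↥I)).mp h))
  have hQne1 : Nat.card (↥I ⧸ JI) ≠ 1 := by
    intro h
    haveI := (Nat.card_eq_one_iff_unique.mp h).1
    exact hne (Subsingleton.elim _ _)
  have hpQ : p ∣ Nat.card (↥I ⧸ JI) := by
    obtain ⟨k, hk, hck⟩ := (Nat.dvd_prime_pow hp).mp hQdvd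
    rcases Nat.eq_zero_or_pos k with h0 | h0
    · exact absurd (by rw [hck, h0, pow_zero]) hQne1
    · rw [hck]; exact dvd_pow_self p h0.ne'
  obtain ⟨q, hqfix, hq0⟩ :=
    hpg.exists_fixed_point_of_prime_dvd_card_of_fixed_point (↥I ⧸ JI) hpQ h0fix
  obtain ⟨x, rfl⟩ := QuotientAddGroup.mk_surjective q
  refine ⟨x.1, x.2, ?_, ?_⟩
  · intro hxJ
    exact hq0 ((QuotientAddGroup.eq_zero_iff x).mpr
      (AddSubgroup.mem_addSubgroupOf.mpr hxJ)).symm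
  · intro a
    have hfx := hqfix a
    rw [hsmul, QuotientAddGroup.eq] at hfx
    have : -(f a x : ↥I) + x ∈ JI := hfx
    have h2 : ((-(f a x : ↥I) + x : ↥I) : A) ∈ J := this
    have h3 : -(lam a x.1) + x.1 ∈ J := h2
    have := J.neg_mem h3
    rw [star_eq]
    rwa [neg_add, neg_neg, ← sub_eq_add_neg] at this

/-- Ascending fixed-point chain inside `I`. -/
def gamma (I : AddSubgroup A) : ℕ → AddSubgroup A
  | 0 => ⊥
  | (m+1) =>
    { carrier := {x : A | x ∈ I ∧ ∀ a : A, st a x ∈ gamma I m}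
      add_mem' := fun hx hy => ⟨I.add_mem hx.1 hy.1, fun a => by
        rw [star_add]; exact AddSubgroup.add_mem _ (hx.2 a) (hy.2 a)⟩
      zero_mem' := ⟨I.zero_mem, fun a => by
        rw [star_zero]; exact AddSubgroup.zero_mem _⟩
      neg_mem' := fun hx => ⟨I.neg_mem hx.1, fun a => by
        rw [star_neg]; exact AddSubgroup.neg_mem _ (hx.2 a)⟩ }

lemma mem_gamma_succ {I : AddSubgroup A} {m : ℕ} {x : A} :
    x ∈ gamma I (m+1) ↔ x ∈ I ∧ ∀ a : A, st a x ∈ gamma I m := Iff.rfl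

lemma gamma_le (I : AddSubgroup A) : ∀ m, gamma I m ≤ I
  | 0 => bot_le
  | (m+1) => fun _ hx => hx.1

lemma gamma_mono (I : AddSubgroup A) : ∀ m, gamma I m ≤ gamma I (m+1)
  | 0 => bot_le
  | (m+1) => fun x hx => ⟨hx.1, fun a => gamma_mono I m (hx.2 a)⟩

lemma gamma_lam (I : AddSubgroup A) : ∀ m, ∀ a : A, ∀ x ∈ gamma I m,
    lam a x ∈ gamma I m
  | 0 => fun a x hx => by
    have hx0 : x = 0 := hx
    show lam a x ∈ (⊥ : AddSubgroup A)
    rw [AddSubgroup.mem_bot, hx0, lam_eq, star_zero, add_zero]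
  | (m+1) => fun a x hx => by
    rw [lam_eq]
    exact AddSubgroup.add_mem _ (gamma_mono I m (hx.2 a)) hx

lemma gamma_lt (hp : p.Prime) (hcard : Nat.card A = p ^ 4)
    {I : AddSubgroup A} (hI : ∀ a : A, ∀ x ∈ I, lam a x ∈ I)
    {m : ℕ} (hne : gamma I m ≠ I) : gamma I m < gamma I (m+1) := by
  have hJI : gamma I m < I := lt_of_le_of_ne (gamma_le I m) hne
  obtain ⟨x, hxI, hxJ, hst⟩ := exists_semifixed hp hcard hJI hI (gamma_lam I m)
  exact SetLike.lt_iff_le_and_exists.mpr ⟨gamma_mono I m, x, mem_gamma_succ.mpr ⟨hxI, hst⟩, hxJ⟩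

lemma exists_gamma_eq (hp : p.Prime) (hcard : Nat.card A = p ^ 4)
    {I : AddSubgroup A} (hI : ∀ a : A, ∀ x ∈ I, lam a x ∈ I) :
    ∃ m, gamma I m = I := by
  haveI : Finite A := Nat.finite_of_card_ne_zero (by
    rw [hcard]; exact pow_ne_zero _ hp.pos.ne')
  by_contra hcon
  push_neg at hcon
  have key : ∀ m, m + 1 ≤ Nat.card (gamma I m) := by
    intro m
    induction m with
    | zero =>
      have := Nat.card_pos (α := ↥(gamma I 0))
      omega
    | succ m ih =>
      have hlt := gamma_lt hp hcard hI (hcon m)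
      have e1 : Nat.card (gamma I m) = ((gamma I m : Set A)).ncard :=
        Nat.card_coe_set_eq _
      have e2 : Nat.card (gamma I (m+1)) = ((gamma I (m+1) : Set A)).ncard :=
        Nat.card_coe_set_eq _
      have hcardlt : Nat.card (gamma I m) < Nat.card (gamma I (m+1)) := by
        rw [e1, e2]
        exact Set.ncard_lt_ncard (SetLike.coe_ssubset_coe.mpr hlt)
          (Set.toFinite _)
      omega
  have hbound : Nat.card (gamma I (Nat.card A)) ≤ Nat.card A := by
    have e1 : Nat.card (gamma I (Nat.card A))
        = ((gamma I (Nat.card A) : Set A)).ncard := Nat.card_coe_set_eq _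
    rw [e1]
    calc ((gamma I (Nat.card A) : Set A)).ncard
        ≤ (Set.univ : Set A).ncard :=
          Set.ncard_le_ncard (Set.subset_univ _) (Set.toFinite _)
      _ = Nat.card A := by rw [Set.ncard_univ]
  have := key (Nat.card A)
  omega

/-- Strict descent: if the left chain stabilizes at a nonzero term, contradiction. -/
lemma lpow_eq_bot_of_stab (hp : p.Prime) (hcard : Nat.card A = p ^ 4)
    {n : ℕ} (hn : 1 ≤ n) (h : lpow A (n+1) = lpow A n) : lpow A n = ⊥ := by
  classical
  set I := lpow A n with hIdef
  have hI : ∀ a : A, ∀ x ∈ I, lam a x ∈ I := fun a x hx => lam_mem_lpow a hx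
  have hex : ∃ m, gamma I m = I := exists_gamma_eq hp hcard hI
  have hMin : gamma I (Nat.find hex) = I := Nat.find_spec hex
  by_contra hbot
  have hM0pos : Nat.find hex ≠ 0 := by
    intro h0
    rw [h0] at hMin
    exact hbot hMin.symm
  obtain ⟨m, hm⟩ : ∃ m, Nat.find hex = m + 1 :=
    ⟨Nat.find hex - 1, (Nat.succ_pred_eq_of_pos (Nat.pos_of_ne_zero hM0pos)).symm⟩
  have hmne : gamma I m ≠ I := Nat.find_min hex (by omega)
  have hMI : gamma I (m+1) = I := hm ▸ hMin
  -- every generator of lpow (n+1) lies in gamma I m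
  obtain ⟨k, rfl⟩ : ∃ k, n = k + 1 := ⟨n - 1, (Nat.succ_pred_eq_of_pos hn).symm⟩
  have hgen : lpow A (k+2) ≤ gamma I m := by
    rw [lpow_two_add]
    rw [AddSubgroup.closure_le]
    rintro x ⟨a, b, hb, rfl⟩
    have hbI : b ∈ gamma I (m+1) := by rw [hMI]; exact hb
    exact hbI.2 a
  have : I ≤ gamma I m := h ▸ hgen
  exact hmne (le_antisymm (gamma_le I m) this)

/-- Left nilpotency: the fifth term of the chain vanishes. -/
lemma lpow_five (hp : p.Prime) (hcard : Nat.card A = p ^ 4) :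
    lpow A 5 = ⊥ := by
  haveI : Finite A := Nat.finite_of_card_ne_zero (by
    rw [hcard]; exact pow_ne_zero _ hp.pos.ne')
  by_contra h5
  have hne : ∀ n, n ≤ 5 → lpow A n ≠ ⊥ := by
    intro n hn hbot
    exact h5 (le_bot_iff.mp (hbot ▸ lpow_le_lpow hn))
  have hstrict : ∀ n, 1 ≤ n → n ≤ 4 → lpow A (n+1) < lpow A n := by
    intro n h1 h4
    refine lt_of_le_of_ne (lpow_succ_le n) (fun heq => ?_)
    exact hne n (by omega) (lpow_eq_bot_of_stab hp hcard h1 heq)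
  -- cardinalities are p-powers
  have hdvd : ∀ n, Nat.card (lpow A n) ∣ p ^ 4 :=
    fun n => hcard ▸ (lpow A n).card_addSubgroup_dvd_card
  have hcards : ∀ n, ∃ k ≤ 4, Nat.card (lpow A n) = p ^ k := by
    intro n
    obtain ⟨k, hk, hck⟩ := (Nat.dvd_prime_pow hp).mp (hdvd n)
    exact ⟨k, hk, hck⟩
  have hlt : ∀ n, 1 ≤ n → n ≤ 4 →
      Nat.card (lpow A (n+1)) < Nat.card (lpow A n) := by
    intro n h1 h4
    have e1 : Nat.card (lpow A (n+1)) = ((lpow A (n+1) : Set A)).ncard :=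
      Nat.card_coe_set_eq _
    have e2 : Nat.card (lpow A n) = ((lpow A n : Set A)).ncard :=
      Nat.card_coe_set_eq _
    rw [e1, e2]
    exact Set.ncard_lt_ncard
      (SetLike.coe_ssubset_coe.mpr (hstrict n h1 h4)) (Set.toFinite _)
  -- exponent descent
  have hexp : ∀ n, 1 ≤ n → n ≤ 4 → ∀ j k, Nat.card (lpow A (n+1)) = p ^ j →
      Nat.card (lpow A n) = p ^ k → j < k := by
    intro n h1 h4 j k hj hk
    have := hlt n h1 h4
    rw [hj, hk] at this
    exact (pow_lt_pow_iff_right₀ hp.one_lt).mp this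
  obtain ⟨k1, hk1le, hk1⟩ := hcards 1
  obtain ⟨k2, hk2le, hk2⟩ := hcards 2
  obtain ⟨k3, hk3le, hk3⟩ := hcards 3
  obtain ⟨k4, hk4le, hk4⟩ := hcards 4
  obtain ⟨k5, hk5le, hk5⟩ := hcards 5
  have h21 := hexp 1 (by omega) (by omega) k2 k1 hk2 hk1
  have h32 := hexp 2 (by omega) (by omega) k3 k2 hk3 hk2
  have h43 := hexp 3 (by omega) (by omega) k4 k3 hk4 hk3
  have h54 := hexp 4 (by omega) (by omega) k5 k4 hk5 hk4
  -- card of lpow A 1 = p ^ 4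
  have htop : Nat.card (lpow A 1) = p ^ 4 := by
    rw [lpow_one']
    rw [← hcard]
    exact Nat.card_congr AddSubgroup.topEquiv.toEquiv
  have hk14 : k1 = 4 := by
    have := htop ▸ hk1
    exact Nat.pow_right_injective hp.two_le this.symm
  have hk50 : k5 = 0 := by omega
  have : Nat.card (lpow A 5) = 1 := by rw [hk5, hk50, pow_zero]
  exact hne 5 le_rfl (AddSubgroup.eq_bot_of_card_eq _ this)

end B

end Brace3Aux

open LeftBrace in
/-- with multiplicative group XV, `P ∈ A³`, `P * Aⁱ ⊆ A^{i+3}`, and the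
resulting vanishing statements. -/
theorem statement3 (p : ℕ) (hp : p.Prime) (hp3 : 3 < p) (A : Type*) [FpBrace p A]
    (P Q R S : A) (hXV : IsXVBrace p A P Q R S) :
    P ∈ lpow A 3 ∧
    (∀ i, 1 ≤ i → ∀ x ∈ lpow A i, star P x ∈ lpow A (i + 3)) ∧
    star P P = 0 ∧ star Q P = 0 ∧ star P Q = 0 ∧
    (∀ a : A, star a P = star P a ∧ star P a ∈ lpow A 4) ∧
    (∀ x ∈ lpow A 2, star P x = 0 ∧ star x P = 0) := by
  classical
  open Brace3Aux in
  obtain ⟨hcard, hgen, hQS, hQR, hPS, hPQ, hPR, hRS, -, -, -, -⟩ := hXV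
  -- `star Q x ∈ lpow (i+2)` for `x ∈ lpow i`, `i ≥ 1`
  have starQ : ∀ i, 1 ≤ i → ∀ x ∈ lpow A i, star Q x ∈ lpow A (i + 2) := by
    intro i hi x hx
    rw [conj_star hRS x]
    refine lam_mem_lpow _ (AddSubgroup.sub_mem _ ?_ ?_)
    · exact star_mem_lpow (by omega) R (star_mem_lpow hi S hx)
    · exact star_mem_lpow (by omega) S (star_mem_lpow hi R hx)
  -- `star P x ∈ lpow (i+3)` for `x ∈ lpow i`, `i ≥ 1`
  have starP : ∀ i, 1 ≤ i → ∀ x ∈ lpow A i, star P x ∈ lpow A (i + 3) := by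
    intro i hi x hx
    rw [conj_star hQS x]
    refine lam_mem_lpow _ (AddSubgroup.sub_mem _ ?_ ?_)
    · have h1 : star S x ∈ lpow A (i+1) := star_mem_lpow hi S hx
      have h2 := starQ (i+1) (by omega) _ h1
      exact (by rw [show i+1+2 = i+3 from by omega] at h2; exact h2)
    · have h1 : star Q x ∈ lpow A (i+2) := starQ i hi x hx
      have h2 := star_mem_lpow (n := i+2) (by omega) S h1
      exact (by rw [show i+2+1 = i+3 from by omega] at h2; exact h2)
  -- `Q ∈ lpow 2`
  have hQ2 : Q ∈ lpow A 2 := by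
    rw [conj_elt hRS]
    refine lam_mem_lpow _ (AddSubgroup.sub_mem _ ?_ ?_)
    · exact star_mem_lpow le_rfl R (AddSubgroup.mem_top S)
    · exact star_mem_lpow le_rfl S (AddSubgroup.mem_top R)
  -- `P ∈ lpow 3`
  have hP3 : P ∈ lpow A 3 := by
    rw [conj_elt hQS]
    refine lam_mem_lpow _ (AddSubgroup.sub_mem _ ?_ ?_)
    · exact starQ 1 le_rfl S (AddSubgroup.mem_top S)
    · exact star_mem_lpow (by omega) S hQ2
  -- `lpow A 5 = ⊥`
  have h5 : lpow A 5 = ⊥ := lpow_five hp hcard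
  have hbot : ∀ x : A, x ∈ lpow A 5 → x = 0 := by
    intro x hx
    rw [h5, AddSubgroup.mem_bot] at hx
    exact hx
  -- `P` is central in `(A, ∘)`
  have hcen : ∀ a : A, P * a = a * P := by
    intro a
    have hle : Subgroup.closure {P, Q, R, S} ≤ Subgroup.centralizer {P} := by
      rw [Subgroup.closure_le]
      intro x hx
      rw [SetLike.mem_coe, Subgroup.mem_centralizer_iff]
      intro y hy
      rw [Set.mem_singleton_iff] at hy
      subst hy
      simp only [Set.mem_insert_iff, Set.mem_singleton_iff] at hx
      rcases hx with rfl | rfl | rfl | rfl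
      · rfl
      · exact hPQ.symm ▸ hPQ
      · exact hPR
      · exact hPS
    have : a ∈ Subgroup.centralizer {P} := hle (hgen ▸ Subgroup.mem_top a)
    exact (this P (Set.mem_singleton P))
  have hcomm : ∀ a : A, star a P = star P a := by
    intro a
    rw [st_def, st_def, hcen a]
    abel
  have hP2 : P ∈ lpow A 2 := lpow_le_lpow (by omega) hP3
  refine ⟨hP3, starP, ?_, ?_, ?_, ?_, ?_⟩
  · exact hbot _ (starP 2 (by omega) P hP2)
  · exact hbot _ (starQ 3 (by omega) P hP3)
  · exact hbot _ (starP 2 (by omega) Q hQ2)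
  · intro a
    exact ⟨hcomm a, starP 1 le_rfl a (AddSubgroup.mem_top a)⟩
  · intro x hx
    have h1 : star P x = 0 := hbot _ (starP 2 (by omega) x hx)
    refine ⟨h1, ?_⟩
    rw [hcomm x]
    exact h1
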